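/- arXiv:1502.01822 — 3 statements merged into one kernel-verified Lean document; each statement's English description precedes it below -/
import Mathlib

section
/- Let A ∈ ℂ^{m×n} be a matrix, let y ∈ ℝ^m have nonnegative entries, and let x_l ∈ ℂ^n. Define z_l ∈ ℂ^m by z_{l,r} = √(y_r) · phase((A x_l)_r) for r = 1,…,m. If x_{l+1} ∈ ℂ^n minimizes the function x ↦ ‖A x − z_l‖₂ over ℂ^n, then ‖ |A x_{l+1}| − √y ‖₂ ≤ ‖ |A x_l| − √y ‖₂, where |v| denotes the vector of entrywise complex moduli and √y the entrywise square root. (Residual reduction property of the Error Reduction algorithm.) -/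
open scoped BigOperators ComplexConjugate

/-- phase(w) = w/|w| if w ≠ 0, else 1. -/
noncomputable def phase (w : ℂ) : ℂ := if w = 0 then 1 else w / (‖w‖ : ℂ)

/-- Euclidean norm of a complex vector. -/
noncomputable def evnorm {ι : Type*} [Fintype ι] (v : ι → ℂ) : ℝ :=
  Real.sqrt (∑ i, ‖v i‖ ^ 2)

/-- Euclidean norm of a real vector. -/
noncomputable def rvnorm {ι : Type*} [Fintype ι] (v : ι → ℝ) : ℝ :=
  Real.sqrt (∑ i, (v i) ^ 2)

/-- Standard Hermitian inner product, conjugate-linear in the first argument. -/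
noncomputable def hinner {n : ℕ} (a x : Fin n → ℂ) : ℂ := ∑ i, conj (a i) * x i

/-- dist(x, x̂) = min over unimodular ω of ‖x − ω·x̂‖₂. -/
noncomputable def pdist {n : ℕ} (x xhat : Fin n → ℂ) : ℝ :=
  ⨅ ω : {ω : ℂ // ‖ω‖ = 1}, evnorm (x - (ω : ℂ) • xhat)

/-- Operator (spectral) norm of a complex matrix w.r.t. Euclidean norms. -/
noncomputable def matOpNorm {ι κ : Type*} [Fintype ι] [Fintype κ] [DecidableEq κ]
    (M : Matrix ι κ ℂ) : ℝ :=
  ‖LinearMap.toContinuousLinearMap (Matrix.toEuclideanLin M)‖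

lemma phase_abs (w : ℂ) : ‖phase w‖ = 1 := by
  unfold phase
  split_ifs with h
  · simp
  · rw [norm_div]
    simp [norm_ne_zero_iff.mpr h]

lemma abs_mul_phase (w : ℂ) : (‖w‖ : ℂ) * phase w = w := by
  unfold phase
  split_ifs with h
  · simp [h]
  · rw [mul_div_assoc', mul_comm, mul_div_assoc, div_self (by exact_mod_cast norm_ne_zero_iff.mpr h), mul_one]

lemma key1 (w : ℂ) (s : ℝ) :
    ‖w - (s : ℂ) * phase w‖ = |‖w‖ - s| := by
  have : w - (s : ℂ) * phase w = ((‖w‖ : ℂ) - s) * phase w := by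
    rw [sub_mul, abs_mul_phase]
  rw [this, norm_mul, phase_abs, mul_one]
  rw [show ((‖w‖ : ℂ) - s) = ((‖w‖ - s : ℝ) : ℂ) by push_cast; ring]
  rw [Complex.norm_real, Real.norm_eq_abs]

lemma key2 (w u : ℂ) (hu : ‖u‖ = 1) (s : ℝ) (hs : 0 ≤ s) :
    |‖w‖ - s| ≤ ‖w - (s : ℂ) * u‖ := by
  have h := abs_norm_sub_norm_le w ((s : ℂ) * u)
  rwa [norm_mul, hu, mul_one, Complex.norm_real, Real.norm_eq_abs, abs_of_nonneg hs] at h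

/-- Residual reduction property of the Error Reduction algorithm. -/
theorem stmt0 {m n : ℕ} (A : Matrix (Fin m) (Fin n) ℂ) (y : Fin m → ℝ)
    (hy : ∀ r, 0 ≤ y r) (xl : Fin n → ℂ) (zl : Fin m → ℂ)
    (hz : zl = fun r => (Real.sqrt (y r) : ℂ) * phase (A.mulVec xl r))
    (xnext : Fin n → ℂ)
    (hmin : ∀ x : Fin n → ℂ,
      evnorm (A.mulVec xnext - zl) ≤ evnorm (A.mulVec x - zl)) :
    rvnorm (fun r => ‖A.mulVec xnext r‖ - Real.sqrt (y r)) ≤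
      rvnorm (fun r => ‖A.mulVec xl r‖ - Real.sqrt (y r)) := by
  have h1 : rvnorm (fun r => ‖A.mulVec xnext r‖ - Real.sqrt (y r)) ≤
      evnorm (A.mulVec xnext - zl) := by
    unfold rvnorm evnorm
    apply Real.sqrt_le_sqrt
    apply Finset.sum_le_sum
    intro r _
    have := key2 (A.mulVec xnext r) (phase (A.mulVec xl r)) (phase_abs _)
      (Real.sqrt (y r)) (Real.sqrt_nonneg _)
    calc (‖A.mulVec xnext r‖ - Real.sqrt (y r)) ^ 2
        = |‖A.mulVec xnext r‖ - Real.sqrt (y r)| ^ 2 := (sq_abs _).symm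
      _ ≤ ‖(A.mulVec xnext - zl) r‖ ^ 2 := by
          apply pow_le_pow_left₀ (abs_nonneg _)
          simpa [hz] using this
  have h2 : evnorm (A.mulVec xl - zl) =
      rvnorm (fun r => ‖A.mulVec xl r‖ - Real.sqrt (y r)) := by
    unfold rvnorm evnorm
    congr 1
    apply Finset.sum_congr rfl
    intro r _
    have := key1 (A.mulVec xl r) (Real.sqrt (y r))
    rw [show (A.mulVec xl - zl) r = A.mulVec xl r - (Real.sqrt (y r) : ℂ) *
      phase (A.mulVec xl r) by simp [hz], this, sq_abs]
  calc rvnorm (fun r => ‖A.mulVec xnext r‖ - Real.sqrt (y r))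
      ≤ evnorm (A.mulVec xnext - zl) := h1
    _ ≤ evnorm (A.mulVec xl - zl) := hmin xl
    _ = _ := h2
end

section
/- Let A_i ∈ ℂ^{p×n} and A_j ∈ ℂ^{q×n}, let C ∈ ℂ^{(p+q)×n} be their vertical concatenation, and assume C has full row rank p+q ≤ n and A_i A_jᴴ = 0. Let y_i ∈ ℝ^p and y_j ∈ ℝ^q have nonnegative entries and let y = [y_i; y_j]. For any x_0 ∈ ℂ^n define x_1 = x_0 + A_i†(√(y_i) ⊙ phase(A_i x_0) − A_i x_0), x_2 = x_1 + A_j†(√(y_j) ⊙ phase(A_j x_1) − A_j x_1), and x_{12} = x_0 + C†(√y ⊙ phase(C x_0) − C x_0), where M† = Mᴴ(MMᴴ)^{-1} and phase is applied entrywise. Then x_2 = x_{12}: applying two iterations of the block Kaczmarz method to the two blocks one after another equals one iteration applied to their concatenation. -/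
open scoped BigOperators ComplexConjugate

/-- Two successive block Kaczmarz iterations on orthogonal blocks equal
one iteration on the concatenated block. -/
theorem stmt6 {p q n : ℕ} (Ai : Matrix (Fin p) (Fin n) ℂ) (Aj : Matrix (Fin q) (Fin n) ℂ)
    (C : Matrix (Fin p ⊕ Fin q) (Fin n) ℂ) (hC : C = Matrix.fromRows Ai Aj)
    (hpq : p + q ≤ n) (hfull : IsUnit (C * C.conjTranspose))
    (horth : Ai * Aj.conjTranspose = 0)
    (yi : Fin p → ℝ) (yj : Fin q → ℝ) (hyi : ∀ r, 0 ≤ yi r) (hyj : ∀ r, 0 ≤ yj r)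
    (y : Fin p ⊕ Fin q → ℝ) (hy : y = Sum.elim yi yj)
    (x0 x1 x2 x12 : Fin n → ℂ)
    (hx1 : x1 = x0 + (Ai.conjTranspose * (Ai * Ai.conjTranspose)⁻¹).mulVec
      (fun r => (Real.sqrt (yi r) : ℂ) * phase (Ai.mulVec x0 r) - Ai.mulVec x0 r))
    (hx2 : x2 = x1 + (Aj.conjTranspose * (Aj * Aj.conjTranspose)⁻¹).mulVec
      (fun r => (Real.sqrt (yj r) : ℂ) * phase (Aj.mulVec x1 r) - Aj.mulVec x1 r))
    (hx12 : x12 = x0 + (C.conjTranspose * (C * C.conjTranspose)⁻¹).mulVec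
      (fun r => (Real.sqrt (y r) : ℂ) * phase (C.mulVec x0 r) - C.mulVec x0 r)) :
    x2 = x12 := by
  subst hC hy
  have horth' : Aj * Ai.conjTranspose = 0 := by
    have := congrArg Matrix.conjTranspose horth
    simpa [Matrix.conjTranspose_mul] using this
  set Ki := Ai * Ai.conjTranspose with hKi
  set Kj := Aj * Aj.conjTranspose with hKj
  have hCcT : (Matrix.fromRows Ai Aj).conjTranspose
      = Matrix.fromCols Ai.conjTranspose Aj.conjTranspose :=
    Matrix.conjTranspose_fromRows_eq_fromCols_conjTranspose _ _
  have hCC : Matrix.fromRows Ai Aj * (Matrix.fromRows Ai Aj).conjTranspose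
      = Matrix.fromBlocks Ki 0 0 Kj := by
    rw [hCcT, Matrix.fromRows_mul_fromCols, horth, horth']
  rw [Matrix.isUnit_iff_isUnit_det, hCC, Matrix.det_fromBlocks_zero₂₁, IsUnit.mul_iff] at hfull
  have hdi : IsUnit Ki.det := hfull.1
  have hdj : IsUnit Kj.det := hfull.2
  have hinv : (Matrix.fromRows Ai Aj * (Matrix.fromRows Ai Aj).conjTranspose)⁻¹
      = Matrix.fromBlocks Ki⁻¹ 0 0 Kj⁻¹ := by
    apply Matrix.inv_eq_right_inv
    rw [hCC, Matrix.fromBlocks_multiply]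
    simp [Matrix.mul_nonsing_inv _ hdi, Matrix.mul_nonsing_inv _ hdj,
      ← Matrix.fromBlocks_one]
  set bi : Fin p → ℂ :=
    fun r => (Real.sqrt (yi r) : ℂ) * phase (Ai.mulVec x0 r) - Ai.mulVec x0 r with hbi
  set bj : Fin q → ℂ :=
    fun r => (Real.sqrt (yj r) : ℂ) * phase (Aj.mulVec x0 r) - Aj.mulVec x0 r with hbj
  have hAjx1 : Aj.mulVec x1 = Aj.mulVec x0 := by
    rw [hx1, Matrix.mulVec_add, Matrix.mulVec_mulVec, ← Matrix.mul_assoc, horth',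
      Matrix.zero_mul, Matrix.zero_mulVec, add_zero]
  have hres : (fun r => (Real.sqrt (Sum.elim yi yj r) : ℂ)
        * phase ((Matrix.fromRows Ai Aj).mulVec x0 r) - (Matrix.fromRows Ai Aj).mulVec x0 r)
      = Sum.elim bi bj := by
    funext r
    cases r <;> simp [Matrix.fromRows_mulVec, hbi, hbj]
  rw [hx12, hinv, hCcT, Matrix.fromCols_mul_fromBlocks, hres]
  simp only [Matrix.mul_zero, Matrix.zero_mul, add_zero, zero_add,
    Matrix.fromCols_mulVec_sumElim]
  rw [hx2, hAjx1, hx1]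
  ring_nf
  rw [hbj]
end

section
/- Let A ∈ ℂ^{m×n} have rows a_1ᴴ,…,a_mᴴ with ‖a_r‖₂ = 1 for all r (A is standardized). Let x̂ ∈ ℂ^n, let y ∈ ℂ^m be defined by y_r = ⟨a_r, x̂⟩, let e ∈ ℂ^m, and let x ∈ ℂ^n be arbitrary. For each r define the Kaczmarz update for the perturbed system, x^r = x + (y_r + e_r − ⟨a_r, x⟩)·a_r. Let σ ≥ 0 satisfy ‖A v‖₂ ≥ σ‖v‖₂ for all v ∈ ℂ^n. Then (1/m) Σ_{r=1}^m ‖x^r − x̂‖₂² ≤ (1 − σ²/m)·‖x − x̂‖₂² + max_{1≤r≤m} |e_r|². (One-step expected error bound for the randomized Kaczmarz method with uniform row selection applied to an inconsistent linear system.) -/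
open scoped BigOperators ComplexConjugate

noncomputable def emb {n : ℕ} (v : Fin n → ℂ) : EuclideanSpace ℂ (Fin n) :=
  (WithLp.equiv 2 (Fin n → ℂ)).symm v

lemma evnorm_eq {n : ℕ} (v : Fin n → ℂ) : evnorm v = ‖emb v‖ := by
  simp [evnorm, emb, EuclideanSpace.norm_eq]

lemma hinner_eq {n : ℕ} (a x : Fin n → ℂ) :
    hinner a x = @inner ℂ (EuclideanSpace ℂ (Fin n)) _ (emb a) (emb x) := by
  simp [hinner, emb, PiLp.inner_apply, RCLike.inner_apply, mul_comm]

lemma emb_sub {n : ℕ} (u v : Fin n → ℂ) : emb (u - v) = emb u - emb v := rfl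
lemma emb_smul {n : ℕ} (c : ℂ) (v : Fin n → ℂ) : emb (c • v) = c • emb v := rfl

lemma evnorm_sq {ι : Type*} [Fintype ι] (v : ι → ℂ) :
    evnorm v ^ 2 = ∑ i, ‖v i‖ ^ 2 := by
  rw [evnorm, Real.sq_sqrt]; positivity

lemma keylem {n : ℕ} (a d : Fin n → ℂ) (ha : evnorm a = 1) (e : ℂ) :
    evnorm (d - (hinner a d - e) • a) ^ 2
      = evnorm d ^ 2 - ‖hinner a d‖ ^ 2 + ‖e‖ ^ 2 := by
  have han : ‖emb a‖ = 1 := by rw [← evnorm_eq]; exact ha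
  set t : ℂ := hinner a d with ht
  have ht' : (@inner ℂ (EuclideanSpace ℂ (Fin n)) _ (emb a) (emb d)) = t :=
    (hinner_eq a d).symm
  rw [evnorm_eq, evnorm_eq, emb_sub, emb_smul]
  rw [@norm_sub_sq ℂ, inner_smul_right, ← inner_conj_symm (emb d) (emb a), ht', norm_smul, han, mul_one]
  simp only [RCLike.mul_re]
  rw [Complex.sq_norm, Complex.sq_norm, Complex.sq_norm]
  simp only [Complex.normSq_apply, Complex.sub_re, Complex.sub_im, Complex.mul_re,
    Complex.mul_im, Complex.conj_re, Complex.conj_im, RCLike.re_to_complex, RCLike.im_to_complex]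
  ring

lemma hinner_sub {n : ℕ} (a u v : Fin n → ℂ) :
    hinner a (u - v) = hinner a u - hinner a v := by
  simp [hinner, mul_sub, Finset.sum_sub_distrib]

/-- One-step expected error bound for the randomized Kaczmarz method with
uniform row selection applied to an inconsistent linear system. -/
theorem stmt9 {m n : ℕ} (a : Fin m → Fin n → ℂ) (ha : ∀ r, evnorm (a r) = 1)
    (xhat : Fin n → ℂ) (y : Fin m → ℂ) (hy : ∀ r, y r = hinner (a r) xhat)
    (e : Fin m → ℂ) (x : Fin n → ℂ) (σ : ℝ) (hσ : 0 ≤ σ)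
    (hsing : ∀ v : Fin n → ℂ, σ * evnorm v ≤ evnorm (fun r => hinner (a r) v)) :
    (1 / (m : ℝ)) * ∑ r, evnorm ((x + (y r + e r - hinner (a r) x) • a r) - xhat) ^ 2 ≤
      (1 - σ ^ 2 / (m : ℝ)) * evnorm (x - xhat) ^ 2 + ⨆ r, ‖e r‖ ^ 2 := by
  rcases Nat.eq_zero_or_pos m with hm | hm
  · subst hm
    simp only [Nat.cast_zero, div_zero, sub_zero, one_mul]
    rw [zero_mul, Real.iSup_of_isEmpty, add_zero]
    positivity
  set d : Fin n → ℂ := x - xhat with hd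
  have key : ∀ r, evnorm ((x + (y r + e r - hinner (a r) x) • a r) - xhat) ^ 2
      = evnorm d ^ 2 - ‖hinner (a r) d‖ ^ 2 + ‖e r‖ ^ 2 := by
    intro r
    have hvec : (x + (y r + e r - hinner (a r) x) • a r) - xhat
        = d - (hinner (a r) d - e r) • a r := by
      rw [hy r, hd, hinner_sub]
      funext i
      simp only [Pi.add_apply, Pi.sub_apply, Pi.smul_apply, smul_eq_mul]
      ring
    rw [hvec, keylem (a r) d (ha r) (e r)]
  have hc : (0:ℝ) < m := Nat.cast_pos.mpr hm
  set D : ℝ := evnorm d ^ 2 with hD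
  set S : ℝ := ∑ r, ‖hinner (a r) d‖ ^ 2 with hS
  set E : ℝ := ∑ r, ‖e r‖ ^ 2 with hE
  set M : ℝ := ⨆ r, ‖e r‖ ^ 2 with hM
  have hsum : ∑ r, evnorm ((x + (y r + e r - hinner (a r) x) • a r) - xhat) ^ 2
      = (m : ℝ) * D - S + E := by
    simp only [key]
    rw [Finset.sum_add_distrib, Finset.sum_sub_distrib, Finset.sum_const,
      Finset.card_univ, Fintype.card_fin, nsmul_eq_mul]
  have hSlb : σ ^ 2 * D ≤ S := by
    have h1 := hsing d
    have h2 : (σ * evnorm d) ^ 2 ≤ evnorm (fun r => hinner (a r) d) ^ 2 :=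
      pow_le_pow_left₀ (mul_nonneg hσ (Real.sqrt_nonneg _)) h1 2
    rw [evnorm_sq] at h2
    calc σ ^ 2 * D = (σ * evnorm d) ^ 2 := by rw [hD]; ring
      _ ≤ S := h2
  have hEub : E ≤ (m : ℝ) * M := by
    have hb : BddAbove (Set.range fun r => ‖e r‖ ^ 2) :=
      Set.Finite.bddAbove (Set.finite_range _)
    calc E ≤ ∑ _r : Fin m, M := Finset.sum_le_sum fun r _ => le_ciSup hb r
      _ = (m : ℝ) * M := by
        rw [Finset.sum_const, Finset.card_univ, Fintype.card_fin, nsmul_eq_mul]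
  rw [hsum, one_div, inv_mul_le_iff₀ hc]
  have : (m:ℝ) * ((1 - σ ^ 2 / m) * D + M) = (m:ℝ) * D - σ ^ 2 * D + m * M := by
    field_simp
  rw [this]
  linarith
end
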